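/- Let α = (α_1,…,α_ℓ) be a composition of n and m ≥ 1. For each r, let C_r be a cyclic subgroup of the symmetric group S_{α_r} and ω_r : C_r → ℂ^× an injective group homomorphism, and assume the following cyclic sieving hypothesis: for every weak composition γ of α_r into m parts and every c ∈ C_r, the number of chains of subsets S_1 ⊆ S_2 ⊆ ⋯ ⊆ S_m = {1,…,α_r} with |S_k| = γ_1+⋯+γ_k that are setwise fixed by c equals the Gaussian multinomial [α_r; γ]_t evaluated at t = ω_r(c). Embed S_{α_1}×⋯×S_{α_ℓ} into S_n by letting the r-th factor permute the r-th consecutive block of size α_r in {1,…,n}. Then for every composition β of n into m parts and every (c_1,…,c_ℓ) ∈ C_1 × ⋯ × C_ℓ, the number of chains of subsets T_1 ⊆ ⋯ ⊆ T_m = {1,…,n} with |T_k| = β_1+⋯+β_k that are setwise fixed by the image of (c_1,…,c_ℓ) in S_n equals Y_{α,β} evaluated at t_r = ω_r(c_r), where Y_{α,β}(t_1,…,t_ℓ) := Σ ∏_{r=1}^ℓ [α_r; β^{(r)}]_{t_r}, the sum being over all tuples (β^{(1)},…,β^{(ℓ)}) of weak compositions of α_1,…,α_ℓ into m parts with componentwise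 sum β. -/

import Mathlib

/-!
The "q = 1" version: cyclic sieving for chains of subsets of `{1,…,n}` under a
product of cyclic groups embedded blockwise in `S_n`.
-/

open scoped Classical

noncomputable section

namespace CSP

open Polynomial

/-- The `t`-factorial `[N]_t! = ∏_{i=1}^N (1 + t + ⋯ + t^{i-1})`. -/
def qFac (N : ℕ) : Polynomial ℤ :=
  ∏ i ∈ Finset.range N, ∑ j ∈ Finset.range (i + 1), (X : Polynomial ℤ) ^ j

/-- The Gaussian multinomial coefficient `[N; γ]_t = [N]_t! / ([γ_1]_t! ⋯ [γ_m]_t!)`. -/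
def qMultinom (N : ℕ) {m : ℕ} (γ : Fin m → ℕ) : Polynomial ℤ :=
  qFac N /ₘ ∏ k : Fin m, qFac (γ k)

variable {n ℓ m : ℕ}

/-- The offset of the `r`-th consecutive block of sizes `α` in `{0,…,n-1}`. -/
def offset (α : Fin ℓ → ℕ) (r : Fin ℓ) : ℕ :=
  ∑ r' ∈ Finset.univ.filter (fun r' => r' < r), α r'

lemma offset_add_eq (α : Fin ℓ → ℕ) (r : Fin ℓ) :
    offset α r + α r = ∑ r' ∈ Finset.univ.filter (fun r' => r' ≤ r), α r' := by
  have h : Finset.univ.filter (fun r' => r' ≤ r)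
      = insert r (Finset.univ.filter (fun r' => r' < r)) := by
    ext r'
    simp only [Finset.mem_filter, Finset.mem_univ, true_and, Finset.mem_insert,
      Fin.le_def, Fin.lt_def, Fin.ext_iff]
    omega
  rw [h, Finset.sum_insert (by simp), offset, add_comm]

lemma offset_add_le (α : Fin ℓ → ℕ) (hα : ∑ r, α r = n) (r : Fin ℓ) :
    offset α r + α r ≤ n := by
  rw [offset_add_eq, ← hα]
  exact Finset.sum_le_sum_of_subset (Finset.filter_subset _ _)

lemma offset_add_le_offset (α : Fin ℓ → ℕ) {r r' : Fin ℓ} (h : r < r') :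
    offset α r + α r ≤ offset α r' := by
  rw [offset_add_eq, offset]
  apply Finset.sum_le_sum_of_subset
  intro x
  simp only [Finset.mem_filter, Finset.mem_univ, true_and, Fin.le_def, Fin.lt_def]
  have := h
  rw [Fin.lt_def] at this
  omega

def blockEmb (α : Fin ℓ → ℕ) (hα : ∑ r, α r = n) (z : Σ r, Fin (α r)) : Fin n :=
  ⟨offset α z.1 + (z.2 : ℕ), by
    have h1 := z.2.isLt
    have h2 := offset_add_le α hα z.1
    omega⟩

lemma blockEmb_injective (α : Fin ℓ → ℕ) (hα : ∑ r, α r = n) :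
    Function.Injective (blockEmb α hα) := by
  rintro ⟨r, y⟩ ⟨r', y'⟩ h
  simp only [blockEmb, Fin.ext_iff] at h
  rcases lt_trichotomy r r' with hl | he | hl
  · have h1 := offset_add_le_offset α hl
    have := y.isLt
    omega
  · subst he
    have : (y : ℕ) = y' := by omega
    exact Sigma.ext rfl (heq_of_eq (Fin.ext this))
  · have h1 := offset_add_le_offset α hl
    have := y'.isLt
    omega

def blockEquiv (α : Fin ℓ → ℕ) (hα : ∑ r, α r = n) : (Σ r, Fin (α r)) ≃ Fin n :=
  Equiv.ofBijective (blockEmb α hα) <| by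
    rw [Fintype.bijective_iff_injective_and_card]
    refine ⟨blockEmb_injective α hα, ?_⟩
    simp [Fintype.card_sigma, hα]

lemma blockEquiv_val (α : Fin ℓ → ℕ) (hα : ∑ r, α r = n) (z : Σ r, Fin (α r)) :
    (blockEquiv α hα z : ℕ) = offset α z.1 + (z.2 : ℕ) := rfl

def fib (α : Fin ℓ → ℕ) (hα : ∑ r, α r = n) (A : Finset (Fin n)) (r : Fin ℓ) :
    Finset (Fin (α r)) :=
  Finset.univ.filter (fun y => blockEquiv α hα ⟨r, y⟩ ∈ A)

lemma mem_fib (α : Fin ℓ → ℕ) (hα : ∑ r, α r = n) (A : Finset (Fin n)) (r : Fin ℓ)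
    (y : Fin (α r)) : y ∈ fib α hα A r ↔ blockEquiv α hα ⟨r, y⟩ ∈ A := by
  simp [fib]

def glue (α : Fin ℓ → ℕ) (hα : ∑ r, α r = n) (S : ∀ r, Finset (Fin (α r))) :
    Finset (Fin n) :=
  (Finset.univ.sigma S).image (blockEquiv α hα)

lemma mem_glue (α : Fin ℓ → ℕ) (hα : ∑ r, α r = n) (S : ∀ r, Finset (Fin (α r)))
    (x : Fin n) :
    x ∈ glue α hα S ↔ ((blockEquiv α hα).symm x).2 ∈ S ((blockEquiv α hα).symm x).1 := by
  simp only [glue, Finset.mem_image, Finset.mem_sigma, Finset.mem_univ, true_and]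
  constructor
  · rintro ⟨z, hz, rfl⟩
    rw [Equiv.symm_apply_apply]
    exact hz
  · intro h
    exact ⟨(blockEquiv α hα).symm x, h, by simp⟩

lemma fib_glue (α : Fin ℓ → ℕ) (hα : ∑ r, α r = n) (S : ∀ r, Finset (Fin (α r)))
    (r : Fin ℓ) : fib α hα (glue α hα S) r = S r := by
  ext y
  rw [mem_fib, mem_glue, Equiv.symm_apply_apply]

lemma glue_fib (α : Fin ℓ → ℕ) (hα : ∑ r, α r = n) (A : Finset (Fin n)) :
    glue α hα (fib α hα A) = A := by
  ext x
  rw [mem_glue, mem_fib]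
  rw [show (⟨((blockEquiv α hα).symm x).1, ((blockEquiv α hα).symm x).2⟩ : Σ r, Fin (α r))
      = (blockEquiv α hα).symm x from rfl]
  rw [Equiv.apply_symm_apply]

lemma card_glue (α : Fin ℓ → ℕ) (hα : ∑ r, α r = n) (S : ∀ r, Finset (Fin (α r))) :
    (glue α hα S).card = ∑ r, (S r).card := by
  rw [glue, Finset.card_image_of_injective _ (blockEquiv α hα).injective,
    Finset.card_sigma]

lemma card_fib_sum (α : Fin ℓ → ℕ) (hα : ∑ r, α r = n) (A : Finset (Fin n)) :
    ∑ r, (fib α hα A r).card = A.card := by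
  conv_rhs => rw [← glue_fib α hα A]
  rw [card_glue]

lemma fib_mono (α : Fin ℓ → ℕ) (hα : ∑ r, α r = n) {A B : Finset (Fin n)}
    (h : A ⊆ B) (r : Fin ℓ) : fib α hα A r ⊆ fib α hα B r := by
  intro y hy
  rw [mem_fib] at *
  exact h hy

lemma glue_mono (α : Fin ℓ → ℕ) (hα : ∑ r, α r = n) {S S' : ∀ r, Finset (Fin (α r))}
    (h : ∀ r, S r ⊆ S' r) : glue α hα S ⊆ glue α hα S' := by
  intro x hx
  rw [mem_glue] at *
  exact h _ hx

lemma card_fib_le (α : Fin ℓ → ℕ) (hα : ∑ r, α r = n) (A : Finset (Fin n)) (r : Fin ℓ) :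
    (fib α hα A r).card ≤ α r := by
  simpa [fib] using Finset.card_le_card (Finset.filter_subset _ (Finset.univ : Finset (Fin (α r))))

lemma fib_univ (α : Fin ℓ → ℕ) (hα : ∑ r, α r = n) (r : Fin ℓ) :
    fib α hα Finset.univ r = Finset.univ := by
  ext y; simp [mem_fib]

-- number theory helpers
def pext (m : ℕ) (f : Fin m → ℕ) (i : ℕ) : ℕ := if h : i < m then f ⟨i, h⟩ else 0

lemma sum_filter_le_eq (f : Fin m → ℕ) (k : Fin m) :
    ∑ k' ∈ Finset.univ.filter (fun k' => k' ≤ k), f k'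
      = ∑ i ∈ Finset.range ((k : ℕ) + 1), pext m f i := by
  have hk := k.isLt
  refine Finset.sum_bij' (i := fun (k' : Fin m) (_ : k' ∈ Finset.univ.filter (fun k' => k' ≤ k)) => (k' : ℕ))
    (j := fun (i : ℕ) (hi : i ∈ Finset.range ((k : ℕ) + 1)) =>
      (⟨i, by rw [Finset.mem_range] at hi; omega⟩ : Fin m)) ?_ ?_ ?_ ?_ ?_
  · intro a ha
    beta_reduce
    rw [Finset.mem_filter] at ha
    rw [Finset.mem_range]
    have := ha.2
    rw [Fin.le_def] at this
    omega
  · intro i hi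
    beta_reduce
    rw [Finset.mem_range] at hi
    rw [Finset.mem_filter]
    refine ⟨Finset.mem_univ _, ?_⟩
    simp only [Fin.le_def, Fin.val_mk]
    omega
  · intro a ha
    simp
  · intro i hi
    simp
  · intro a ha
    simp [pext, a.isLt]

def nD (F : ℕ → ℕ) : ℕ → ℕ
  | 0 => F 0
  | (i + 1) => F (i + 1) - F i

lemma nD_le (F : ℕ → ℕ) (i : ℕ) : nD F i ≤ F i := by
  cases i with
  | zero => exact le_refl _
  | succ i => exact Nat.sub_le _ _

lemma sum_nD (F : ℕ → ℕ) (K : ℕ) (hF : ∀ i < K, F i ≤ F (i + 1)) :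
    ∑ i ∈ Finset.range (K + 1), nD F i = F K := by
  induction K with
  | zero => simp [nD]
  | succ K ih =>
      rw [Finset.sum_range_succ, ih (fun i hi => hF i (by omega))]
      have := hF K (by omega)
      simp only [nD]
      omega

def dff (f : Fin m → ℕ) (k : Fin m) : ℕ := nD (pext m f) (k : ℕ)

lemma dff_le (f : Fin m → ℕ) (k : Fin m) : dff f k ≤ f k := by
  have h := nD_le (pext m f) (k : ℕ)
  simpa [dff, pext, k.isLt] using h

lemma sum_dff (f : Fin m → ℕ) (hf : Monotone f) (k : Fin m) :
    ∑ k' ∈ Finset.univ.filter (fun k' => k' ≤ k), dff f k' = f k := by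
  rw [sum_filter_le_eq]
  have hk := k.isLt
  have h1 : ∀ i ∈ Finset.range ((k : ℕ) + 1), pext m (dff f) i = nD (pext m f) i := by
    intro i hi
    rw [Finset.mem_range] at hi
    have him : i < m := by omega
    simp [pext, dff, him]
  rw [Finset.sum_congr rfl h1]
  rw [sum_nD (pext m f) (k : ℕ) (fun i hi => by
    have h1 : i < m := by omega
    have h2 : i + 1 < m := by omega
    simp only [pext, dif_pos h1, dif_pos h2]
    exact hf (by simp [Fin.le_def]))]
  simp [pext, k.isLt]

lemma eq_of_psum (a b : Fin m → ℕ)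
    (h : ∀ k : Fin m, ∑ k' ∈ Finset.univ.filter (fun k' => k' ≤ k), a k'
        = ∑ k' ∈ Finset.univ.filter (fun k' => k' ≤ k), b k') :
    ∀ k, a k = b k := by
  have h' : ∀ K, K < m → ∑ i ∈ Finset.range (K + 1), pext m a i
      = ∑ i ∈ Finset.range (K + 1), pext m b i := by
    intro K hK
    have := h ⟨K, hK⟩
    rwa [sum_filter_le_eq, sum_filter_le_eq] at this
  have key : ∀ K, K < m → pext m a K = pext m b K := by
    intro K
    induction K with
    | zero => intro hK; simpa using h' 0 hK
    | succ K _ =>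
        intro hK
        have h1 := h' K (by omega)
        have h2 := h' (K + 1) hK
        rw [Finset.sum_range_succ (pext m a) (K + 1),
          Finset.sum_range_succ (pext m b) (K + 1)] at h2
        omega
  intro k
  have := key (k : ℕ) k.isLt
  simpa [pext, k.isLt] using this

def typ (α : Fin ℓ → ℕ) (hα : ∑ r, α r = n) (T : Fin m → Finset (Fin n)) (r : Fin ℓ)
    (k : Fin m) : Fin (n + 1) :=
  ⟨dff (fun k' => (fib α hα (T k') r).card) k, by
    have h1 := dff_le (fun k' => (fib α hα (T k') r).card) k
    have h2 := card_fib_le α hα (T k) r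
    have h3 : α r ≤ n := by
      rw [← hα]
      exact Finset.single_le_sum (fun _ _ => Nat.zero_le _) (Finset.mem_univ r)
    omega⟩

/-- **"q=1" cyclic sieving for flags of subsets.** Assume each cyclic subgroup
`C_r ≤ S_{α_r}` satisfies the CSP for chains of subsets of `{1,…,α_r}` with the
Gaussian multinomials `[α_r;γ]_t` (via `ω_r`). Let `σ ∈ S_n` be the image of
`(c_1,…,c_ℓ)` under the blockwise embedding `S_{α_1}×⋯×S_{α_ℓ} ↪ S_n`. Then the
number of chains of subsets of `{1,…,n}` of type `β` fixed setwise by `σ` equals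
`Y_{α,β}` evaluated at `t_r = ω_r(c_r)`, with
`Y_{α,β}(t) = Σ ∏_r [α_r; β^{(r)}]_{t_r}` summed over tuples of weak compositions
`β^{(r)}` of `α_r` with componentwise sum `β`. -/
theorem subset_flags_cyclic_sieving
    (α : Fin ℓ → ℕ) (hαpos : ∀ r, 0 < α r) (hα : ∑ r, α r = n) (hm : 0 < m)
    (C : ∀ r, Subgroup (Equiv.Perm (Fin (α r)))) (hC : ∀ r, IsCyclic (C r))
    (ω : ∀ r, (C r) →* ℂˣ) (hω : ∀ r, Function.Injective (ω r))
    (hCSP : ∀ (r : Fin ℓ) (γ : Fin m → ℕ), (∑ k, γ k = α r) → ∀ c : C r,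
      (Nat.card {S : Fin m → Finset (Fin (α r)) //
          Monotone S ∧
          (∀ k : Fin m, (S k).card = ∑ k' ∈ Finset.univ.filter (fun k' => k' ≤ k), γ k') ∧
          ∀ k, (S k).image ((c : Equiv.Perm (Fin (α r))) : Fin (α r) → Fin (α r)) = S k}
        : ℂ) =
        Polynomial.aeval (((ω r c : ℂˣ) : ℂ)) (qMultinom (α r) γ))
    (β : Fin m → ℕ) (hβpos : ∀ k, 0 < β k) (hβ : ∑ k, β k = n)
    (c : ∀ r, C r) (σ : Equiv.Perm (Fin n))
    (hσ : ∀ (r : Fin ℓ) (x : Fin n) (y : Fin (α r)),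
      (x : ℕ) = offset α r + (y : ℕ) →
        (σ x : ℕ) = offset α r + (((c r : Equiv.Perm (Fin (α r))) y : ℕ))) :
    (Nat.card {T : Fin m → Finset (Fin n) //
        Monotone T ∧
        (∀ k : Fin m, (T k).card = ∑ k' ∈ Finset.univ.filter (fun k' => k' ≤ k), β k') ∧
        ∀ k, (T k).image (σ : Fin n → Fin n) = T k} : ℂ) =
      ∑ g ∈ Finset.univ.filter
          (fun g : Fin ℓ → Fin m → Fin (n + 1) =>
            (∀ r, ∑ k, ((g r k : ℕ)) = α r) ∧ ∀ k, ∑ r, ((g r k : ℕ)) = β k),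
        ∏ r : Fin ℓ,
          Polynomial.aeval (((ω r (c r) : ℂˣ) : ℂ))
            (qMultinom (α r) (fun k => ((g r k : ℕ)))) := by
  classical
  -- σ acts blockwise
  have hσE : ∀ z : (Σ r, Fin (α r)), σ (blockEquiv α hα z)
      = blockEquiv α hα ⟨z.1, (c z.1 : Equiv.Perm (Fin (α z.1))) z.2⟩ := by
    rintro ⟨r, y⟩
    apply Fin.ext
    rw [blockEquiv_val α hα ⟨r, _⟩]
    exact hσ r (blockEquiv α hα ⟨r, y⟩) y (blockEquiv_val α hα ⟨r, y⟩)
  have fib_image : ∀ (A : Finset (Fin n)) (r : Fin ℓ),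
      fib α hα (A.image σ) r
        = (fib α hα A r).image ((c r : Equiv.Perm (Fin (α r))) : Fin (α r) → Fin (α r)) := by
    intro A r
    ext y
    rw [mem_fib]
    simp only [Finset.mem_image]
    constructor
    · rintro ⟨x, hx, hxe⟩
      obtain ⟨z, rfl⟩ := (blockEquiv α hα).surjective x
      rw [hσE z] at hxe
      have hz := (blockEquiv α hα).injective hxe
      obtain ⟨r', y'⟩ := z
      have h1 : r' = r := congrArg Sigma.fst hz
      subst h1
      have h2 : (c r' : Equiv.Perm (Fin (α r'))) y' = y := by
        have := (Sigma.mk.inj_iff.mp hz).2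
        exact eq_of_heq this
      exact ⟨y', (mem_fib α hα A r' y').mpr hx, h2⟩
    · rintro ⟨y', hy', rfl⟩
      rw [mem_fib] at hy'
      exact ⟨blockEquiv α hα ⟨r, y'⟩, hy', (hσE ⟨r, y'⟩)⟩
  -- characterization of the type map
  have char : ∀ (T : Fin m → Finset (Fin n)), Monotone T →
      ∀ (g : Fin ℓ → Fin m → Fin (n + 1)),
      (typ α hα T = g ↔ ∀ r k, (fib α hα (T k) r).card
        = ∑ k' ∈ Finset.univ.filter (fun k' => k' ≤ k), (g r k' : ℕ)) := by
    intro T hT g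
    have hmono : ∀ r : Fin ℓ, Monotone (fun k' => (fib α hα (T k') r).card) := by
      intro r a b hab
      exact Finset.card_le_card (fib_mono α hα (hT hab) r)
    constructor
    · rintro rfl
      intro r k
      exact (sum_dff _ (hmono r) k).symm
    · intro h
      funext r k
      apply Fin.ext
      have := eq_of_psum (fun k => ((g r k : ℕ))) (dff (fun k' => (fib α hα (T k') r).card))
        (fun k => by rw [← h r k, sum_dff _ (hmono r) k]) k
      exact this.symm
  -- fibers over invalid g are empty
  have valid_of_fiber : ∀ (T : Fin m → Finset (Fin n)),
      (Monotone T ∧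
        (∀ k : Fin m, (T k).card = ∑ k' ∈ Finset.univ.filter (fun k' => k' ≤ k), β k') ∧
        ∀ k, (T k).image (σ : Fin n → Fin n) = T k) →
      ((∀ r, ∑ k, ((typ α hα T r k : ℕ)) = α r) ∧ ∀ k, ∑ r, ((typ α hα T r k : ℕ)) = β k) := by
    intro T hT
    have hTc : ∀ r k, (fib α hα (T k) r).card
        = ∑ k' ∈ Finset.univ.filter (fun k' => k' ≤ k), (typ α hα T r k' : ℕ) :=
      (char T hT.1 (typ α hα T)).mp rfl
    have klast : Fin m := ⟨m - 1, by omega⟩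
    have huf : Finset.univ.filter (fun k' : Fin m => k' ≤ (⟨m - 1, by omega⟩ : Fin m))
        = Finset.univ := by
      ext k'
      simp only [Finset.mem_filter, Finset.mem_univ, true_and, Fin.le_def, Fin.val_mk,
        iff_true]
      have := k'.isLt
      omega
    have hTlast : T ⟨m - 1, by omega⟩ = Finset.univ := by
      apply Finset.eq_univ_of_card
      rw [hT.2.1 ⟨m - 1, by omega⟩, huf, hβ, Fintype.card_fin]
    constructor
    · intro r
      have := hTc r ⟨m - 1, by omega⟩
      rw [huf, hTlast, fib_univ, Finset.card_univ, Fintype.card_fin] at this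
      exact this.symm
    · exact eq_of_psum (fun k => ∑ r, ((typ α hα T r k : ℕ))) β (fun k => by
        rw [Finset.sum_comm]
        have h1 : ∀ r ∈ (Finset.univ : Finset (Fin ℓ)),
            (∑ k' ∈ Finset.univ.filter (fun k' => k' ≤ k), ((typ α hα T r k' : ℕ)))
              = (fib α hα (T k) r).card := fun r _ => (hTc r k).symm
        rw [Finset.sum_congr rfl h1, card_fib_sum, hT.2.1 k])
  -- main cardinality identity
  have hnat : Nat.card {T : Fin m → Finset (Fin n) //
        Monotone T ∧
        (∀ k : Fin m, (T k).card = ∑ k' ∈ Finset.univ.filter (fun k' => k' ≤ k), β k') ∧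
        ∀ k, (T k).image (σ : Fin n → Fin n) = T k}
      = ∑ g ∈ Finset.univ.filter
          (fun g : Fin ℓ → Fin m → Fin (n + 1) =>
            (∀ r, ∑ k, ((g r k : ℕ)) = α r) ∧ ∀ k, ∑ r, ((g r k : ℕ)) = β k),
        ∏ r : Fin ℓ,
          Nat.card {S : Fin m → Finset (Fin (α r)) //
            Monotone S ∧
            (∀ k : Fin m, (S k).card
              = ∑ k' ∈ Finset.univ.filter (fun k' => k' ≤ k), ((g r k' : ℕ))) ∧
            ∀ k, (S k).image (((c r : Equiv.Perm (Fin (α r)))) : Fin (α r) → Fin (α r))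
              = S k} := by
    have e1 := Equiv.sigmaFiberEquiv (fun T : {T : Fin m → Finset (Fin n) //
        Monotone T ∧
        (∀ k : Fin m, (T k).card = ∑ k' ∈ Finset.univ.filter (fun k' => k' ≤ k), β k') ∧
        ∀ k, (T k).image (σ : Fin n → Fin n) = T k} => typ α hα T.1)
    rw [← Nat.card_congr e1]
    rw [Nat.card_eq_fintype_card, Fintype.card_sigma]
    rw [← Finset.sum_filter_add_sum_filter_not Finset.univ
        (fun g : Fin ℓ → Fin m → Fin (n + 1) =>
          (∀ r, ∑ k, ((g r k : ℕ)) = α r) ∧ ∀ k, ∑ r, ((g r k : ℕ)) = β k)]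
    have hz : (∑ g ∈ Finset.univ.filter
        (fun g : Fin ℓ → Fin m → Fin (n + 1) =>
          ¬ ((∀ r, ∑ k, ((g r k : ℕ)) = α r) ∧ ∀ k, ∑ r, ((g r k : ℕ)) = β k)),
        Fintype.card {T : {T : Fin m → Finset (Fin n) //
          Monotone T ∧
          (∀ k : Fin m, (T k).card = ∑ k' ∈ Finset.univ.filter (fun k' => k' ≤ k), β k') ∧
          ∀ k, (T k).image (σ : Fin n → Fin n) = T k} // typ α hα T.1 = g}) = 0 := by
      refine Finset.sum_eq_zero (fun g hg => ?_)
      rw [Finset.mem_filter] at hg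
      refine Fintype.card_eq_zero_iff.mpr ⟨fun T => hg.2 ?_⟩
      rw [← T.2]
      exact valid_of_fiber T.1.1 T.1.2
    rw [hz, add_zero]
    refine Finset.sum_congr rfl (fun g hg => ?_)
    have hg' := (Finset.mem_filter.mp hg).2
    have e2 : {T : {T : Fin m → Finset (Fin n) //
        Monotone T ∧
        (∀ k : Fin m, (T k).card = ∑ k' ∈ Finset.univ.filter (fun k' => k' ≤ k), β k') ∧
        ∀ k, (T k).image (σ : Fin n → Fin n) = T k} // typ α hα T.1 = g} ≃
        (∀ r : Fin ℓ, {S : Fin m → Finset (Fin (α r)) //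
          Monotone S ∧
          (∀ k : Fin m, (S k).card
            = ∑ k' ∈ Finset.univ.filter (fun k' => k' ≤ k), ((g r k' : ℕ))) ∧
          ∀ k, (S k).image (((c r : Equiv.Perm (Fin (α r)))) : Fin (α r) → Fin (α r))
            = S k}) := by
      refine ⟨fun T r => ⟨fun k => fib α hα (T.1.1 k) r, ?_, ?_, ?_⟩,
        fun S => ⟨⟨fun k => glue α hα (fun r => (S r).1 k), ?_, ?_, ?_⟩, ?_⟩, ?_, ?_⟩
      · intro a b hab
        exact fib_mono α hα (T.1.2.1 hab) r
      · exact fun k => ((char T.1.1 T.1.2.1 g).mp T.2) r k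
      · intro k
        rw [← fib_image, T.1.2.2.2 k]
      · intro a b hab
        exact glue_mono α hα (fun r => (S r).2.1 hab)
      · intro k
        rw [card_glue]
        rw [Finset.sum_congr rfl (fun r _ => (S r).2.2.1 k)]
        rw [Finset.sum_comm]
        exact Finset.sum_congr rfl (fun k' _ => hg'.2 k')
      · intro k
        have h1 : ∀ r, fib α hα ((glue α hα (fun r => (S r).1 k)).image σ) r
            = (S r).1 k := by
          intro r
          rw [fib_image, fib_glue]
          exact (S r).2.2.2 k
        calc (glue α hα (fun r => (S r).1 k)).image σ
            = glue α hα (fib α hα ((glue α hα (fun r => (S r).1 k)).image σ)) :=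
              (glue_fib α hα _).symm
          _ = glue α hα (fun r => (S r).1 k) := by
              congr 1
              funext r
              exact h1 r
      · refine (char _ (fun a b hab => glue_mono α hα (fun r => (S r).2.1 hab)) g).mpr ?_
        intro r k
        rw [fib_glue]
        exact (S r).2.2.1 k
      · intro T
        apply Subtype.ext
        apply Subtype.ext
        funext k
        exact glue_fib α hα (T.1.1 k)
      · intro S
        funext r
        apply Subtype.ext
        funext k
        exact fib_glue α hα (fun r => (S r).1 k) r
    rw [← Nat.card_eq_fintype_card, Nat.card_congr e2, Nat.card_pi]
  rw [hnat]
  push_cast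
  refine Finset.sum_congr rfl (fun g hg => Finset.prod_congr rfl (fun r _ => ?_))
  rw [Finset.mem_filter] at hg
  exact hCSP r (fun k => ((g r k : ℕ))) (hg.2.1 r) (c r)


end CSP
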